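/- Let b = 2 and let g_l(x) = {2^l x} be the saw-tooth wave. For the Haar wavelet ψ_{j,k}(x) = 2^{j/2} ψ(2^j x - k) with ψ = 1_{[0,1/2)} - 1_{[1/2,1)}, the inner product ⟨ψ_{j,k}, g_l⟩ (over [0,1]) equals 0 if j < l, and equals -(1/4)·2^{l-j}·2^{-j/2} if j ≥ l. -/

import Mathlib

open Filter MeasureTheory
attribute [local instance] Classical.propDecidable

/-- The 1-periodic saw-tooth function. -/
noncomputable def saw (x : ℝ) : ℝ :=
  if ∃ n : ℤ, x = (n : ℝ) then 0 else x - ⌊x⌋ - 1/2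

/-- The Haar mother wavelet ψ = 1_{[0,1/2)} - 1_{[1/2,1)}. -/
noncomputable def haarPsi (x : ℝ) : ℝ :=
  Set.indicator (Set.Ico (0:ℝ) (1/2)) (fun _ => (1:ℝ)) x
    - Set.indicator (Set.Ico (1/2:ℝ) 1) (fun _ => (1:ℝ)) x

namespace HaarSawAux

/-- The centered fractional part. -/
noncomputable def H (x : ℝ) : ℝ := Int.fract x - 1/2

lemma H_intInt (a b : ℝ) : IntervalIntegrable H MeasureSpace.volume a b := by
  rw [intervalIntegrable_iff]
  apply Measure.integrableOn_of_bounded (M := 1)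
  · exact (measure_Ioc_lt_top).ne
  · exact (measurable_fract.sub measurable_const).aestronglyMeasurable
  · refine ae_of_all _ fun x => ?_
    have h1 := Int.fract_nonneg x
    have h2 := Int.fract_lt_one x
    rw [Real.norm_eq_abs, abs_le]
    constructor <;> simp [H] <;> linarith

lemma H_periodic : Function.Periodic H 1 := fun x => by
  simp [H, Int.fract_add_intCast, Int.fract_add_one]

lemma H_integral_01 : ∫ x in (0:ℝ)..1, H x = 0 := by
  have key : ∀ᵐ x : ℝ, x ∈ Set.uIoc (0:ℝ) 1 → H x = x - 1/2 := by
    have h1 : ∀ᵐ x : ℝ, x ∉ ({1} : Set ℝ) :=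
      measure_eq_zero_iff_ae_notMem.mp (measure_singleton 1)
    filter_upwards [h1] with x hx hmem
    rw [Set.uIoc_of_le (by norm_num : (0:ℝ) ≤ 1)] at hmem
    have hx1 : x < 1 := lt_of_le_of_ne hmem.2 (by simpa using hx)
    have : Int.fract x = x := Int.fract_eq_self.mpr ⟨le_of_lt hmem.1, hx1⟩
    simp [H, this]
  rw [intervalIntegral.integral_congr_ae key,
    intervalIntegral.integral_sub intervalIntegral.intervalIntegrable_id intervalIntegrable_const,
    integral_id, intervalIntegral.integral_const]
  norm_num

lemma H_integral_int (t : ℝ) (n : ℤ) : ∫ x in t..(t + (n:ℝ)), H x = 0 := by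
  have h := H_periodic.intervalIntegral_add_zsmul_eq n t (fun a b => H_intInt a b)
  have h2 := H_periodic.intervalIntegral_add_eq t 0
  simp only [zsmul_eq_mul, mul_one, zero_add] at h h2
  rw [h, h2, H_integral_01, mul_zero]

lemma H_integral_cell (M : ℤ) (c d : ℝ) (hc : (M:ℝ) ≤ c) (hcd : c ≤ d)
    (hd : d ≤ (M:ℝ) + 1) :
    ∫ x in c..d, H x = (d^2 - c^2)/2 - ((M:ℝ) + 1/2) * (d - c) := by
  have key : ∀ᵐ x : ℝ, x ∈ Set.uIoc c d → H x = x - ((M:ℝ) + 1/2) := by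
    have h1 : ∀ᵐ x : ℝ, x ∉ ({(M:ℝ) + 1} : Set ℝ) :=
      measure_eq_zero_iff_ae_notMem.mp (measure_singleton _)
    filter_upwards [h1] with x hx hmem
    rw [Set.uIoc_of_le hcd] at hmem
    have hxlt : x < (M:ℝ) + 1 :=
      lt_of_le_of_ne (le_trans hmem.2 hd) (by simpa using hx)
    have hfl : ⌊x⌋ = M := by
      rw [Int.floor_eq_iff]
      exact ⟨le_trans hc (le_of_lt hmem.1), by exact_mod_cast hxlt⟩
    simp only [H, Int.fract, hfl]
    ring
  rw [intervalIntegral.integral_congr_ae key,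
    intervalIntegral.integral_sub intervalIntegral.intervalIntegrable_id intervalIntegrable_const,
    integral_id, intervalIntegral.integral_const, smul_eq_mul]
  ring

lemma integral_indicator_Ico (G : ℝ → ℝ) (c d : ℝ) (h0 : 0 ≤ c) (hcd : c ≤ d)
    (h1 : d ≤ 1) :
    ∫ x in (0:ℝ)..1, Set.indicator (Set.Ico c d) G x = ∫ x in c..d, G x := by
  rw [intervalIntegral.integral_of_le (by norm_num : (0:ℝ) ≤ 1),
    intervalIntegral.integral_of_le hcd,
    MeasureTheory.integral_indicator measurableSet_Ico,
    Measure.restrict_restrict measurableSet_Ico]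
  apply setIntegral_congr_set
  rw [MeasureTheory.ae_eq_set]
  constructor
  · refine measure_mono_null (fun x hx => ?_) (measure_singleton c)
    obtain ⟨⟨⟨hcx, hxd⟩, _⟩, hnot⟩ := hx
    have : ¬ c < x := fun h => hnot ⟨h, le_of_lt hxd⟩
    simpa using le_antisymm (not_lt.mp this) hcx
  · refine measure_mono_null (fun x hx => ?_) (measure_singleton d)
    obtain ⟨⟨hcx, hxd⟩, hnot⟩ := hx
    have hx01 : x ∈ Set.Ioc (0:ℝ) 1 := ⟨lt_of_le_of_lt h0 hcx, le_trans hxd h1⟩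
    have hxIco : x ∉ Set.Ico c d := fun h => hnot ⟨h, hx01⟩
    have hdx : ¬ x < d := fun h => hxIco ⟨le_of_lt hcx, h⟩
    simpa using le_antisymm hxd (not_lt.mp hdx)

lemma saw_ae (c : ℝ) (hc : c ≠ 0) : ∀ᵐ x : ℝ, saw (c * x) = H (c * x) := by
  have hS : {x : ℝ | ∃ n : ℤ, c * x = (n:ℝ)}.Countable := by
    apply (Set.countable_range (fun n : ℤ => (n:ℝ) / c)).mono
    rintro x ⟨n, hn⟩
    refine ⟨n, ?_⟩
    field_simp
    rw [← hn]
  filter_upwards [measure_eq_zero_iff_ae_notMem.mp (hS.measure_zero volume)] with x hx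
  have hx' : ¬ ∃ n : ℤ, c * x = (n:ℝ) := hx
  rw [saw, if_neg (by simpa [eq_comm] using hx')]
  simp only [H, Int.fract]

end HaarSawAux

/-- Haar coefficients of the dyadic saw-tooth waves g_l(x) = {2^l x}:
⟨ψ_{j,k}, g_l⟩ = 0 if j < l, and -(1/4)·2^{l-j}·2^{-j/2} if j ≥ l. -/
theorem haar_coeff_sawtooth (j k l : ℕ) (hk : k < 2 ^ j) :
    ∫ x in (0:ℝ)..1, ((2:ℝ) ^ ((j:ℝ)/2) * haarPsi ((2:ℝ) ^ j * x - (k:ℝ)))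
        * saw ((2:ℝ) ^ l * x) =
      if j < l then 0
      else -(1/4) * (2:ℝ) ^ ((l:ℝ) - (j:ℝ)) * (2:ℝ) ^ (-(j:ℝ)/2) := by
  classical
  open HaarSawAux in
  set P : ℝ := (2:ℝ)^j with hPdef
  set L : ℝ := (2:ℝ)^l with hLdef
  have hP : (0:ℝ) < P := by positivity
  have hL : (0:ℝ) < L := by positivity
  set a : ℝ := (k:ℝ)/P with ha
  set m : ℝ := ((k:ℝ)+1/2)/P with hm
  set b : ℝ := ((k:ℝ)+1)/P with hb
  have ha0 : (0:ℝ) ≤ a := by positivity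
  have ham : a ≤ m := (div_le_div_iff_of_pos_right hP).mpr (by linarith)
  have hmb : m ≤ b := (div_le_div_iff_of_pos_right hP).mpr (by linarith)
  have hkP : (k:ℝ) + 1 ≤ P := by
    rw [hPdef]; exact_mod_cast Nat.succ_le_of_lt hk
  have hb1 : b ≤ 1 := by rw [hb, div_le_one hP]; exact hkP
  have hm1 : m ≤ 1 := le_trans hmb hb1
  have hm0 : (0:ℝ) ≤ m := le_trans ha0 ham
  -- pointwise rewriting of the integrand (for a.e. x)
  have hpt : ∀ x : ℝ, haarPsi (P*x - (k:ℝ)) * HaarSawAux.H (L*x)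
      = (Set.indicator (Set.Ico a m) (fun y => HaarSawAux.H (L*y)) x
          - Set.indicator (Set.Ico m b) (fun y => HaarSawAux.H (L*y)) x) := by
    intro x
    have h1 : (P*x - (k:ℝ) ∈ Set.Ico (0:ℝ) (1/2)) ↔ x ∈ Set.Ico a m := by
      simp only [Set.mem_Ico, ha, hm, div_le_iff₀ hP, lt_div_iff₀ hP]
      constructor <;> rintro ⟨u, v⟩ <;> constructor <;> nlinarith
    have h2 : (P*x - (k:ℝ) ∈ Set.Ico (1/2:ℝ) 1) ↔ x ∈ Set.Ico m b := by
      simp only [Set.mem_Ico, hm, hb, div_le_iff₀ hP, lt_div_iff₀ hP]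
      constructor <;> rintro ⟨u, v⟩ <;> constructor <;> nlinarith
    simp only [haarPsi, Set.indicator_apply]
    rw [if_congr h1 rfl rfl, if_congr h2 rfl rfl]
    split_ifs <;> ring
  -- integrability facts
  have hGon : IntegrableOn (fun y => HaarSawAux.H (L*y)) (Set.Ioc (0:ℝ) 1) := by
    have h1 := (HaarSawAux.H_intInt (L*0) (L*1)).comp_mul_left (c := L)
    rw [mul_div_cancel_left₀ _ hL.ne', mul_div_cancel_left₀ _ hL.ne'] at h1
    rw [← intervalIntegrable_iff_integrableOn_Ioc_of_le (by norm_num : (0:ℝ) ≤ 1)]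
    exact h1
  have hint1 : IntervalIntegrable
      (fun x => Set.indicator (Set.Ico a m) (fun y => HaarSawAux.H (L*y)) x)
      MeasureSpace.volume 0 1 := by
    rw [intervalIntegrable_iff_integrableOn_Ioc_of_le (by norm_num : (0:ℝ) ≤ 1)]
    exact hGon.indicator measurableSet_Ico
  have hint2 : IntervalIntegrable
      (fun x => Set.indicator (Set.Ico m b) (fun y => HaarSawAux.H (L*y)) x)
      MeasureSpace.volume 0 1 := by
    rw [intervalIntegrable_iff_integrableOn_Ioc_of_le (by norm_num : (0:ℝ) ≤ 1)]
    exact hGon.indicator measurableSet_Ico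
  -- rewrite the integral
  have hstep1 : ∫ x in (0:ℝ)..1, ((2:ℝ) ^ ((j:ℝ)/2) * haarPsi (P * x - (k:ℝ)))
      * saw (L * x)
      = (2:ℝ) ^ ((j:ℝ)/2) *
        ((∫ u in L*a..L*m, HaarSawAux.H u) / L - (∫ u in L*m..L*b, HaarSawAux.H u) / L) := by
    have hcongr : ∫ x in (0:ℝ)..1, ((2:ℝ) ^ ((j:ℝ)/2) * haarPsi (P * x - (k:ℝ)))
        * saw (L * x)
        = ∫ x in (0:ℝ)..1, (2:ℝ) ^ ((j:ℝ)/2) *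
            (Set.indicator (Set.Ico a m) (fun y => HaarSawAux.H (L*y)) x
              - Set.indicator (Set.Ico m b) (fun y => HaarSawAux.H (L*y)) x) := by
      apply intervalIntegral.integral_congr_ae
      filter_upwards [HaarSawAux.saw_ae L hL.ne'] with x hsaw _
      rw [mul_assoc, hsaw, hpt x]
    rw [hcongr, intervalIntegral.integral_const_mul,
      intervalIntegral.integral_sub hint1 hint2,
      HaarSawAux.integral_indicator_Ico _ a m ha0 ham hm1,
      HaarSawAux.integral_indicator_Ico _ m b hm0 hmb hb1,
      intervalIntegral.integral_comp_mul_left _ hL.ne',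
      intervalIntegral.integral_comp_mul_left _ hL.ne']
    simp only [smul_eq_mul]
    ring
  rw [hstep1]
  rcases lt_or_ge j l with hjl | hlj
  · -- case j < l : both pieces vanish
    rw [if_pos hjl]
    set n : ℕ := 2^(l - (j+1)) with hn
    have hnP : (n:ℝ) * (2*P) = L := by
      rw [hPdef, hLdef, hn]
      push_cast
      rw [show (2:ℝ) * 2^j = 2^(j+1) by ring, ← pow_add]
      congr 1
      omega
    have hn' : ((n:ℤ):ℝ) = L / (2*P) := by
      push_cast
      rw [eq_div_iff (by positivity)]
      exact hnP
    have hma : L * m = L * a + ((n:ℤ):ℝ) := by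
      rw [hn', hm, ha]
      field_simp
    have hbm : L * b = L * m + ((n:ℤ):ℝ) := by
      rw [hn', hm, hb]
      field_simp
      ring
    rw [hbm, HaarSawAux.H_integral_int, hma, HaarSawAux.H_integral_int]
    simp
  · -- case l ≤ j
    rw [if_neg (not_lt.mpr hlj)]
    set d : ℕ := 2^(j - l) with hd
    have hd0 : (0:ℝ) < (d:ℝ) := by positivity
    have hdP : (d:ℝ) * L = P := by
      rw [hPdef, hLdef, hd]
      push_cast
      rw [← pow_add]
      congr 1
      omega
    set M : ℤ := ((k / d : ℕ) : ℤ) with hM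
    have hLa : L * a = (k:ℝ)/(d:ℝ) := by
      rw [ha, ← hdP]
      field_simp
    have hLm : L * m = ((k:ℝ)+1/2)/(d:ℝ) := by
      rw [hm, ← hdP]
      field_simp
    have hLb : L * b = ((k:ℝ)+1)/(d:ℝ) := by
      rw [hb, ← hdP]
      field_simp
    have hM1 : (M:ℝ) ≤ L * a := by
      rw [hLa, le_div_iff₀ hd0, hM]
      exact_mod_cast Nat.div_mul_le_self k d
    have hM2 : L * b ≤ (M:ℝ) + 1 := by
      rw [hLb, div_le_iff₀ hd0, hM]
      have hdpos : 0 < d := by rw [hd]; positivity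
      have : k < (k/d + 1) * d := (Nat.div_lt_iff_lt_mul hdpos).mp (Nat.lt_succ_self _)
      have : k + 1 ≤ (k/d + 1) * d := this
      exact_mod_cast this
    have hamL : L * a ≤ L * m := mul_le_mul_of_nonneg_left ham hL.le
    have hmbL : L * m ≤ L * b := mul_le_mul_of_nonneg_left hmb hL.le
    have hM1m : (M:ℝ) ≤ L * m := le_trans hM1 hamL
    have hM2m : L * m ≤ (M:ℝ) + 1 := le_trans hmbL hM2
    rw [HaarSawAux.H_integral_cell M (L*a) (L*m) hM1 hamL hM2m,
        HaarSawAux.H_integral_cell M (L*m) (L*b) hM1m hmbL hM2]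
    rw [hLa, hLm, hLb]
    clear_value d M P L a m b
    have hEE : ((((k:ℝ)+1/2)/(d:ℝ))^2 - ((k:ℝ)/(d:ℝ))^2)/2
          - ((M:ℝ) + 1/2) * (((k:ℝ)+1/2)/(d:ℝ) - (k:ℝ)/(d:ℝ))
        - (((((k:ℝ)+1)/(d:ℝ))^2 - (((k:ℝ)+1/2)/(d:ℝ))^2)/2
          - ((M:ℝ) + 1/2) * (((k:ℝ)+1)/(d:ℝ) - ((k:ℝ)+1/2)/(d:ℝ)))
        = -(1/4) * (1/(d:ℝ)^2) := by
      ring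
    have hLP2 : L / P^2 = 1/((d:ℝ)^2 * L) := by
      rw [← hdP, mul_pow]
      rw [div_eq_mul_inv, mul_inv, one_div, mul_inv]
      rw [pow_two L, mul_inv]
      field_simp
    have hrw : (2:ℝ)^((j:ℝ)/2) * (L / P^2) = (2:ℝ)^((l:ℝ)-(j:ℝ)) * (2:ℝ)^(-(j:ℝ)/2) := by
      rw [hLdef, hPdef, ← Real.rpow_natCast (2:ℝ) l, ← Real.rpow_natCast (2:ℝ) j,
        pow_two, ← Real.rpow_add two_pos, ← Real.rpow_sub two_pos,
        ← Real.rpow_add two_pos, ← Real.rpow_add two_pos]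
      congr 1
      ring
    rw [div_sub_div_same, hEE,
      show -(1/4) * (2:ℝ)^((l:ℝ)-(j:ℝ)) * (2:ℝ)^(-(j:ℝ)/2)
        = -(1/4) * ((2:ℝ)^((l:ℝ)-(j:ℝ)) * (2:ℝ)^(-(j:ℝ)/2)) by ring, ← hrw, hLP2]
    ring
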